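/- For all natural numbers n and k with k ≤ n, the k-th derivative of the Legendre polynomial of degree n equals (∏_{j=0}^{k−1} (2n−1−2j)) · P_{n−k}(x) plus a real linear combination of the Legendre polynomials P_{n−k−2}, P_{n−k−4}, …, i.e., d^k/dx^k P_n − (2n−1)(2n−3)⋯(2n−2k+1) · P_{n−k} lies in the real span of {P_{n−k−2i} : 1 ≤ i ≤ ⌊(n−k)/2⌋}. -/

import Mathlib

open Polynomial

/-- Legendre polynomial via Rodrigues' formula. -/
noncomputable def legendre (n : ℕ) : ℝ → ℝ :=
  fun x => (1 / (2 ^ n * (n.factorial : ℝ))) * iteratedDeriv n (fun y => (y ^ 2 - 1) ^ n) x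

noncomputable def fpow (n : ℕ) : Polynomial ℝ := ((X:Polynomial ℝ)^2 - 1)^n
noncomputable def cc (n : ℕ) : ℝ := 1 / (2 ^ n * (n.factorial : ℝ))
noncomputable def Q (n : ℕ) : Polynomial ℝ := C (cc n) * derivative^[n] (fpow n)

theorem cc_rel (n : ℕ) : cc (n+1) * (2*((n:ℝ)+1)) = cc n := by
  unfold cc
  rw [Nat.factorial_succ]
  have h1 : ((n.factorial : ℝ)) ≠ 0 := Nat.cast_ne_zero.mpr n.factorial_ne_zero
  have h2 : (2:ℝ)^n ≠ 0 := by positivity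
  have h3 : ((n:ℝ)+1) ≠ 0 := by positivity
  push_cast
  field_simp
  ring

theorem deriv_fpow (n : ℕ) :
    derivative (fpow (n+1)) = C (2*((n:ℝ)+1)) * (X * fpow n) := by
  unfold fpow
  rw [derivative_pow, Nat.add_sub_cancel]
  have h : derivative ((X:Polynomial ℝ)^2 - 1) = C 2 * X := by
    simp [derivative_X_pow]; rw [← C_1, ← C_add]; norm_num
  rw [h]
  have h2 : (C (((n:ℕ)+1 : ℕ)) : Polynomial ℝ) = C ((n:ℝ)+1) := by push_cast; ring_nf
  rw [h2, show (C (2*((n:ℝ)+1)) : Polynomial ℝ) = C 2 * C ((n:ℝ)+1) by rw [← C_mul]]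
  ring

theorem leibnizX (k : ℕ) (p : Polynomial ℝ) :
    derivative^[k+1] (X * p) = X * derivative^[k+1] p + C ((k:ℝ)+1) * derivative^[k] p := by
  induction k generalizing p with
  | zero => simp [derivative_mul]; ring
  | succ k ih =>
    rw [Function.iterate_succ_apply' _ (k+1) (X*p), ih p]
    rw [derivative_add, derivative_mul, derivative_X, one_mul, derivative_C_mul]
    rw [← Function.iterate_succ_apply' (⇑derivative) (k+1) p,
      ← Function.iterate_succ_apply' (⇑derivative) k p]
    simp only [Nat.succ_eq_add_one]
    push_cast
    rw [show (C ((k:ℝ)+1+1) : Polynomial ℝ) = C ((k:ℝ)+1) + C 1 by rw [← C_add]]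
    simp only [map_one]
    ring

theorem deriv_Q (n : ℕ) : derivative (Q n) = C (cc n) * derivative^[n+1] (fpow n) := by
  unfold Q
  rw [derivative_C_mul, ← Function.iterate_succ_apply' (⇑derivative) n (fpow n)]

theorem identA (n : ℕ) :
    derivative (Q (n+1)) = X * derivative (Q n) + C ((n:ℝ)+1) * Q n := by
  rw [deriv_Q, deriv_Q]
  unfold Q
  rw [Function.iterate_succ_apply (⇑derivative) (n+1) (fpow (n+1)), deriv_fpow,
    iterate_derivative_C_mul, leibnizX n (fpow n)]
  have key : C (cc (n+1)) * C (2*((n:ℝ)+1)) = C (cc n) := by rw [← C_mul, cc_rel]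
  calc C (cc (n+1)) * (C (2*((n:ℝ)+1)) * (X * derivative^[n+1] (fpow n) + C ((n:ℝ)+1) * derivative^[n] (fpow n)))
      = (C (cc (n+1)) * C (2*((n:ℝ)+1))) * (X * derivative^[n+1] (fpow n) + C ((n:ℝ)+1) * derivative^[n] (fpow n)) := by ring
    _ = C (cc n) * (X * derivative^[n+1] (fpow n) + C ((n:ℝ)+1) * derivative^[n] (fpow n)) := by rw [key]
    _ = X * (C (cc n) * derivative^[n+1] (fpow n)) + C ((n:ℝ)+1) * (C (cc n) * derivative^[n] (fpow n)) := by ring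

theorem X_mul_deriv_fpow (n : ℕ) :
    X * derivative (fpow (n+1)) = C (2*((n:ℝ)+1)) * fpow (n+1) + C (2*((n:ℝ)+1)) * fpow n := by
  rw [deriv_fpow]
  have h : (X:Polynomial ℝ) * (C (2*((n:ℝ)+1)) * (X * fpow n)) = C (2*((n:ℝ)+1)) * (X^2 * fpow n) := by ring
  rw [h, show (X:Polynomial ℝ)^2 * fpow n = ((X^2 - 1) + 1) * fpow n by ring]
  have h2 : ((X:Polynomial ℝ)^2 - 1) * fpow n = fpow (n+1) := by
    unfold fpow; rw [pow_succ]; ring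
  rw [add_mul, h2]
  ring

theorem identB (n : ℕ) :
    X * derivative (Q (n+1)) = C ((n:ℝ)+1) * Q (n+1) + derivative (Q n) := by
  have main : X * derivative^[n+2] (fpow (n+1)) =
      C ((n:ℝ)+1) * derivative^[n+1] (fpow (n+1)) + C (2*((n:ℝ)+1)) * derivative^[n+1] (fpow n) := by
    have h0 := congrArg (derivative^[n+1]) (X_mul_deriv_fpow n)
    rw [leibnizX n (derivative (fpow (n+1))), iterate_map_add,
      iterate_derivative_C_mul, iterate_derivative_C_mul,
      ← Function.iterate_succ_apply (⇑derivative) (n+1) (fpow (n+1)),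
      ← Function.iterate_succ_apply (⇑derivative) n (fpow (n+1))] at h0
    have h1 : (C (2*((n:ℝ)+1)) : Polynomial ℝ) = C ((n:ℝ)+1) + C ((n:ℝ)+1) := by rw [← C_add]; ring_nf
    simp only [Nat.succ_eq_add_one] at h0
    rw [h1] at h0 ⊢
    linear_combination h0
  have key : C (cc (n+1)) * C (2*((n:ℝ)+1)) = C (cc n) := by rw [← C_mul, cc_rel]
  rw [deriv_Q (n+1), deriv_Q n]
  unfold Q
  linear_combination C (cc (n+1)) * main + derivative^[n+1] (fpow n) * key

theorem recQ (n : ℕ) :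
    derivative (Q (n+2)) = C (2*(n:ℝ)+3) * Q (n+1) + derivative (Q n) := by
  have a := identA (n+1)
  have b := identB n
  have h1 : (C ((((n+1):ℕ):ℝ)+1) : Polynomial ℝ) + C ((n:ℝ)+1) = C (2*(n:ℝ)+3) := by
    rw [← C_add]; push_cast; ring_nf
  linear_combination a + b + Q (n+1) * h1

theorem Q_zero : Q 0 = 1 := by
  unfold Q cc fpow
  simp

theorem Q_one : Q 1 = X := by
  unfold Q cc fpow
  simp only [pow_one, Function.iterate_one]
  have h : derivative ((X:Polynomial ℝ)^2 - 1) = C 2 * X := by simp [derivative_X_pow]; rw [← C_1, ← C_add]; norm_num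
  rw [h, ← mul_assoc, ← C_mul]
  norm_num

theorem deriv_Q_one : derivative (Q 1) = Q 0 := by
  rw [Q_one, Q_zero, derivative_X]

def Uset (m : ℕ) : Set (Polynomial ℝ) := {p | ∃ i, 2*i+1 ≤ m ∧ p = Q (m - 1 - 2*i)}

def Tset (m : ℕ) : Set (Polynomial ℝ) := {p | ∃ i, 1 ≤ i ∧ i ≤ m/2 ∧ p = Q (m - 2*i)}

noncomputable def Tsub (m : ℕ) : Submodule ℝ (Polynomial ℝ) := Submodule.span ℝ (Tset m)

theorem derivQ_mem : ∀ m, derivative (Q m) ∈ Submodule.span ℝ (Uset m)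
  | 0 => by
      rw [Q_zero, derivative_one]
      exact Submodule.zero_mem _
  | 1 => by
      rw [deriv_Q_one]
      exact Submodule.subset_span ⟨0, by omega, by norm_num⟩
  | (m+2) => by
      rw [recQ m]
      refine Submodule.add_mem _ ?_ ?_
      · rw [← Polynomial.smul_eq_C_mul]
        refine Submodule.smul_mem _ _ (Submodule.subset_span ⟨0, by omega, ?_⟩)
        norm_num
      · refine Submodule.span_mono ?_ (derivQ_mem m)
        rintro p ⟨i, hi, rfl⟩
        exact ⟨i+1, by omega, by congr 1; omega⟩

theorem span_U_le_T (m i : ℕ) (h1 : 1 ≤ i) (h2 : 2*i ≤ m+1) :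
    Submodule.span ℝ (Uset (m+1-2*i)) ≤ Tsub m := by
  refine Submodule.span_mono ?_
  rintro p ⟨l, hl, rfl⟩
  exact ⟨i+l, by omega, by omega, by congr 1; omega⟩

theorem L2 : ∀ m : ℕ, derivative (Q (m+1)) - (2*(m:ℝ)+1) • Q m ∈ Tsub m
  | 0 => by
      rw [deriv_Q_one]
      norm_num
  | (m+1) => by
      have h : (2*(((m+1):ℕ):ℝ)+1) • Q (m+1) = C (2*(m:ℝ)+3) * Q (m+1) := by
        rw [Polynomial.smul_eq_C_mul]
        congr 1
        push_cast; ring_nf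
      have he : derivative (Q (m+1+1)) - (2*(((m+1):ℕ):ℝ)+1) • Q (m+1) = derivative (Q m) := by
        rw [show m+1+1 = m+2 from rfl, recQ m, h]; ring
      rw [he]
      exact span_U_le_T (m+1) 1 le_rfl (by omega) (by simpa using derivQ_mem m)

theorem Tmap (m : ℕ) :
    Submodule.map (derivative : Polynomial ℝ →ₗ[ℝ] Polynomial ℝ) (Tsub (m+1)) ≤ Tsub m := by
  rw [Tsub, Submodule.map_span, Submodule.span_le]
  rintro q ⟨p, ⟨i, h1, h2, rfl⟩, rfl⟩
  have : (m+1) - 2*i = m+1-2*i := rfl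
  exact span_U_le_T m i h1 (by omega) (derivQ_mem (m+1-2*i))

theorem mainP (n : ℕ) : ∀ k, k ≤ n →
    derivative^[k] (Q n) - (∏ j ∈ Finset.range k, (2*(n:ℝ) - 1 - 2*j)) • Q (n-k) ∈ Tsub (n-k) := by
  intro k
  induction k with
  | zero => intro _; simp
  | succ k ih =>
    intro hk
    have hk' : k ≤ n := by omega
    obtain ⟨m, hm⟩ : ∃ m, n - k = m + 1 := ⟨n - k - 1, by omega⟩
    have hg := ih hk'
    rw [hm] at hg
    set c : ℝ := ∏ j ∈ Finset.range k, (2*(n:ℝ) - 1 - 2*j) with hc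
    have hsub : n - (k+1) = m := by omega
    have hcast : (2*(n:ℝ) - 1 - 2*k) = 2*(m:ℝ)+1 := by
      have : (n:ℝ) = (k:ℝ) + (m:ℝ) + 1 := by
        have : n = k + m + 1 := by omega
        rw [this]; push_cast; ring
      rw [this]; ring
    have hprod : (∏ j ∈ Finset.range (k+1), (2*(n:ℝ) - 1 - 2*j)) = c * (2*(m:ℝ)+1) := by
      rw [Finset.prod_range_succ, hcast]
    rw [hsub, hprod]
    have hiter : derivative^[k+1] (Q n) = derivative (derivative^[k] (Q n)) :=
      Function.iterate_succ_apply' _ _ _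
    have key : derivative^[k+1] (Q n) - (c * (2*(m:ℝ)+1)) • Q m =
        derivative ((derivative^[k] (Q n)) - c • Q (m+1)) +
          c • (derivative (Q (m+1)) - (2*(m:ℝ)+1) • Q m) := by
      rw [derivative_sub, derivative_smul, hiter]
      rw [smul_sub, mul_smul]
      ring
    rw [key]
    refine Submodule.add_mem _ ?_ (Submodule.smul_mem _ _ (L2 m))
    exact Tmap m (Submodule.mem_map_of_mem hg)

theorem iter_eval (k : ℕ) (p : Polynomial ℝ) :
    iteratedDeriv k (fun x => p.eval x) = fun x => (derivative^[k] p).eval x := by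
  induction k generalizing p with
  | zero => simp [iteratedDeriv_zero]
  | succ k ih =>
    rw [iteratedDeriv_succ, ih, Function.iterate_succ_apply']
    funext x
    exact Polynomial.deriv _

noncomputable def E : Polynomial ℝ →ₗ[ℝ] (ℝ → ℝ) where
  toFun := fun p x => p.eval x
  map_add' := by intro p q; funext x; simp
  map_smul' := by intro a p; funext x; simp

theorem legendre_eq (m : ℕ) : legendre m = E (Q m) := by
  funext x
  show (1 / (2 ^ m * (m.factorial : ℝ))) * iteratedDeriv m (fun y => (y ^ 2 - 1) ^ m) x
      = (C (cc m) * derivative^[m] (fpow m)).eval x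
  have hf : (fun y : ℝ => (y ^ 2 - 1) ^ m) = fun y => (fpow m).eval y := by
    funext y; simp [fpow]
  rw [hf, iter_eval]
  simp [cc]

theorem iter_legendre (k n : ℕ) :
    iteratedDeriv k (legendre n) = E (derivative^[k] (Q n)) := by
  rw [legendre_eq]
  show iteratedDeriv k (fun x => (Q n).eval x) = _
  rw [iter_eval]
  rfl

theorem legendre_iteratedDeriv_leading_coeff (n k : ℕ) (hk : k ≤ n) :
    iteratedDeriv k (legendre n) -
        (∏ j ∈ Finset.range k, (2 * (n : ℝ) - 1 - 2 * j)) • legendre (n - k) ∈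
      Submodule.span ℝ
        {g : ℝ → ℝ | ∃ i : ℕ, 1 ≤ i ∧ i ≤ (n - k) / 2 ∧ g = legendre (n - k - 2 * i)} := by
  have hdiff : iteratedDeriv k (legendre n) -
      (∏ j ∈ Finset.range k, (2 * (n : ℝ) - 1 - 2 * j)) • legendre (n - k) =
      E (derivative^[k] (Q n) - (∏ j ∈ Finset.range k, (2 * (n : ℝ) - 1 - 2 * j)) • Q (n - k)) := by
    rw [map_sub, map_smul, iter_legendre, legendre_eq]
  rw [hdiff]
  have hmem := mainP n k hk
  have h2 : E _ ∈ Submodule.map E (Tsub (n-k)) := Submodule.mem_map_of_mem hmem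
  have h3 : Submodule.map E (Tsub (n-k)) ≤
      Submodule.span ℝ {g : ℝ → ℝ | ∃ i : ℕ, 1 ≤ i ∧ i ≤ (n - k) / 2 ∧ g = legendre (n - k - 2 * i)} := by
    rw [Tsub, Submodule.map_span, Submodule.span_le]
    rintro g ⟨p, ⟨i, hi1, hi2, rfl⟩, rfl⟩
    exact Submodule.subset_span ⟨i, hi1, hi2, (legendre_eq _).symm⟩
  exact h3 h2
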